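/- There exists a constant K > 0 such that for every multi-index α ∈ ℕ³ and every x ∈ ℝ³ \ {0}, the partial derivative ∂^α of the function x ↦ 1/|x| satisfies |∂^α (1/|x|)| ≤ K^{|α|} |α|! / |x|^{1+|α|}. -/

import Mathlib

/-- Iterated partial derivative of a scalar function on `ℝ³` along a list of coordinate
directions. -/
noncomputable def pderivList :
    List (Fin 3) → (EuclideanSpace ℝ (Fin 3) → ℝ) → (EuclideanSpace ℝ (Fin 3) → ℝ)
  | [], f => f
  | (i :: L), f => fun x => fderiv ℝ (pderivList L f) x (EuclideanSpace.single i 1)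

/-- The partial derivative `∂^α` for a multi-index `α ∈ ℕ³` : we differentiate `α i` times
in each coordinate direction `i`. -/
noncomputable def multiDeriv (α : Fin 3 → ℕ) (f : EuclideanSpace ℝ (Fin 3) → ℝ) :
    EuclideanSpace ℝ (Fin 3) → ℝ :=
  pderivList ((List.finRange 3).flatMap fun i => List.replicate (α i) i) f

open MvPolynomial

noncomputable abbrev ev (P : MvPolynomial (Fin 3) ℝ) (x : EuclideanSpace ℝ (Fin 3)) : ℝ :=
  MvPolynomial.eval (fun i => x i) P

noncomputable def evD (P : MvPolynomial (Fin 3) ℝ) (x : EuclideanSpace ℝ (Fin 3)) :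
    EuclideanSpace ℝ (Fin 3) →L[ℝ] ℝ :=
  ∑ i, ev (pderiv i P) x • EuclideanSpace.proj (𝕜 := ℝ) i

theorem evD_apply_single (P : MvPolynomial (Fin 3) ℝ) (x : EuclideanSpace ℝ (Fin 3)) (i : Fin 3) :
    evD P x (EuclideanSpace.single i 1) = ev (pderiv i P) x := by
  simp [evD, ContinuousLinearMap.sum_apply, EuclideanSpace.single_apply,
    Finset.sum_ite_eq', mul_comm]

theorem hasFDerivAt_ev (P : MvPolynomial (Fin 3) ℝ) (x : EuclideanSpace ℝ (Fin 3)) :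
    HasFDerivAt (fun y => ev P y) (evD P x) x := by
  induction P using MvPolynomial.induction_on with
  | C a =>
      have h1 : (fun y : EuclideanSpace ℝ (Fin 3) => ev (C a) y) = fun _ => a := by
        funext y; simp [ev]
      have h0 : evD (C a) x = 0 := by simp [evD]
      rw [h1, h0]; exact hasFDerivAt_const _ _
  | add p q hp hq =>
      have h0 : evD (p + q) x = evD p x + evD q x := by
        simp [evD, add_smul, Finset.sum_add_distrib]
      have h := hp.add hq
      rw [h0]
      rw [show (fun y => ev (p + q) y) = (fun y => ev p y) + fun y => ev q y by ext y; simp [ev]]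
      exact h
  | mul_X p i hp =>
      have hXi : HasFDerivAt (fun y : EuclideanSpace ℝ (Fin 3) => y i)
          (EuclideanSpace.proj (𝕜 := ℝ) i) x := (EuclideanSpace.proj (𝕜 := ℝ) i).hasFDerivAt
      have h := hp.mul hXi
      have heq : ((fun y : EuclideanSpace ℝ (Fin 3) => ev p y) * fun y => y i)
          = fun y => ev (p * X i) y := by
        funext y; simp [ev]
      rw [heq] at h
      refine h.congr_fderiv (Eq.symm ?_)
      rw [evD]
      have hterm : ∀ j : Fin 3, ev (pderiv j (p * X i)) x • EuclideanSpace.proj (𝕜 := ℝ) j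
          = (x i * ev (pderiv j p) x) • EuclideanSpace.proj (𝕜 := ℝ) j
            + (if j = i then ev p x • EuclideanSpace.proj (𝕜 := ℝ) j else 0) := by
        intro j
        rw [pderiv_mul]
        by_cases hji : j = i
        · subst hji
          simp [ev, add_smul, mul_comm]
        · rw [pderiv_X_of_ne (Ne.symm hji)]
          simp [ev, hji, mul_comm]
      calc (∑ j, ev (pderiv j (p * X i)) x • EuclideanSpace.proj (𝕜 := ℝ) j)
          = ∑ j : Fin 3, ((x i * ev (pderiv j p) x) • EuclideanSpace.proj (𝕜 := ℝ) j
            + (if j = i then ev p x • EuclideanSpace.proj (𝕜 := ℝ) j else 0)) :=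
            Finset.sum_congr rfl fun j _ => hterm j
        _ = (∑ j : Fin 3, (x i * ev (pderiv j p) x) • EuclideanSpace.proj (𝕜 := ℝ) j)
            + ∑ j : Fin 3, (if j = i then ev p x • EuclideanSpace.proj (𝕜 := ℝ) j else 0) :=
            Finset.sum_add_distrib
        _ = ev p x • EuclideanSpace.proj (𝕜 := ℝ) i + x i • evD p x := by
            rw [Finset.sum_ite_eq' Finset.univ i
              (fun j => ev p x • EuclideanSpace.proj (𝕜 := ℝ) j)]
            simp [evD, Finset.smul_sum, smul_smul, add_comm]

noncomputable def l1 (P : MvPolynomial (Fin 3) ℝ) : ℝ :=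
  ∑ m ∈ P.support, |MvPolynomial.coeff m P|

theorem l1_nonneg (P : MvPolynomial (Fin 3) ℝ) : 0 ≤ l1 P :=
  Finset.sum_nonneg fun _ _ => abs_nonneg _

theorem l1_eq_sum (P : MvPolynomial (Fin 3) ℝ) (s : Finset ((Fin 3) →₀ ℕ))
    (hs : P.support ⊆ s) : l1 P = ∑ m ∈ s, |MvPolynomial.coeff m P| := by
  refine Finset.sum_subset hs fun m _ hm => ?_
  rw [MvPolynomial.notMem_support_iff.mp hm, abs_zero]

theorem l1_add_le (P Q : MvPolynomial (Fin 3) ℝ) : l1 (P + Q) ≤ l1 P + l1 Q := by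
  rw [l1_eq_sum (P + Q) (P.support ∪ Q.support) (MvPolynomial.support_add),
    l1_eq_sum P (P.support ∪ Q.support) Finset.subset_union_left,
    l1_eq_sum Q (P.support ∪ Q.support) Finset.subset_union_right, ← Finset.sum_add_distrib]
  exact Finset.sum_le_sum fun m _ => by rw [MvPolynomial.coeff_add]; exact abs_add_le _ _

theorem l1_smul_le (c : ℝ) (P : MvPolynomial (Fin 3) ℝ) : l1 (c • P) ≤ |c| * l1 P := by
  rw [l1_eq_sum (c • P) P.support (MvPolynomial.support_smul), l1, Finset.mul_sum]
  refine Finset.sum_le_sum fun m _ => ?_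
  rw [MvPolynomial.coeff_smul, smul_eq_mul, abs_mul]

theorem l1_sum_le {ι : Type*} (s : Finset ι) (f : ι → MvPolynomial (Fin 3) ℝ) :
    l1 (∑ i ∈ s, f i) ≤ ∑ i ∈ s, l1 (f i) := by
  classical
  induction s using Finset.induction_on with
  | empty => simp [l1]
  | insert _ _ h ih =>
      rw [Finset.sum_insert h, Finset.sum_insert h]
      exact (l1_add_le _ _).trans (by linarith)

theorem l1_monomial_le (m : (Fin 3) →₀ ℕ) (c : ℝ) : l1 (monomial m c) ≤ |c| := by
  by_cases hc : c = 0
  · simp [hc, l1]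
  · rw [l1, MvPolynomial.support_monomial, if_neg hc]
    simp

theorem l1_X_mul_le (i : Fin 3) (P : MvPolynomial (Fin 3) ℝ) : l1 (X i * P) ≤ l1 P := by
  conv_lhs => rw [P.as_sum, Finset.mul_sum]
  refine (l1_sum_le _ _).trans ?_
  rw [l1]
  refine Finset.sum_le_sum fun m hm => ?_
  rw [show (X i : MvPolynomial (Fin 3) ℝ) * monomial m (coeff m P)
    = monomial (Finsupp.single i 1 + m) (coeff m P) by
      rw [MvPolynomial.monomial_single_add, pow_one]]
  exact l1_monomial_le _ _

theorem degree_add' (a b : (Fin 3) →₀ ℕ) :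
    Finsupp.degree (a + b) = Finsupp.degree a + Finsupp.degree b := by
  simp only [Finsupp.degree_eq_weight_one, map_add]

theorem degree_of_mem_support {P : MvPolynomial (Fin 3) ℝ} {n : ℕ} (hP : P.IsHomogeneous n)
    {m : (Fin 3) →₀ ℕ} (hm : m ∈ P.support) : Finsupp.degree m = n := by
  rw [Finsupp.degree_eq_weight_one]
  exact hP (MvPolynomial.mem_support_iff.mp hm)

theorem pderiv_as_sum (i : Fin 3) (P : MvPolynomial (Fin 3) ℝ) :
    pderiv i P = ∑ m ∈ P.support,
      monomial (m - Finsupp.single i 1) (coeff m P * (m i : ℝ)) := by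
  conv_lhs => rw [P.as_sum, map_sum]
  exact Finset.sum_congr rfl fun m _ => by rw [pderiv_monomial]

theorem isHomogeneous_pderiv {P : MvPolynomial (Fin 3) ℝ} {n : ℕ} (hP : P.IsHomogeneous n)
    (i : Fin 3) : (pderiv i P).IsHomogeneous (n - 1) := by
  rw [pderiv_as_sum]
  refine MvPolynomial.IsHomogeneous.sum _ _ _ fun m hm => ?_
  by_cases hmi : m i = 0
  · rw [hmi]; norm_num
    exact MvPolynomial.isHomogeneous_zero _ _ _
  · refine MvPolynomial.isHomogeneous_monomial _ ?_
    have h1 : Finsupp.single i 1 ≤ m := Finsupp.single_le_iff.mpr (Nat.one_le_iff_ne_zero.mpr hmi)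
    have h2 : (m - Finsupp.single i 1) + Finsupp.single i 1 = m := tsub_add_cancel_of_le h1
    have h3 := degree_add' (m - Finsupp.single i 1) (Finsupp.single i 1)
    rw [h2] at h3
    have h4 : Finsupp.degree (Finsupp.single i 1) = 1 := by
      exact Finsupp.degree_single i 1
    rw [degree_of_mem_support hP hm, h4] at h3
    omega

theorem l1_pderiv_le (i : Fin 3) {P : MvPolynomial (Fin 3) ℝ} {n : ℕ}
    (hP : P.IsHomogeneous n) : l1 (pderiv i P) ≤ n * l1 P := by
  rw [pderiv_as_sum]
  refine (l1_sum_le _ _).trans ?_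
  rw [l1, Finset.mul_sum]
  refine Finset.sum_le_sum fun m hm => (l1_monomial_le _ _).trans ?_
  rw [abs_mul]
  have h1 : |(m i : ℝ)| ≤ (n : ℝ) := by
    rw [Nat.abs_cast, Nat.cast_le]
    exact (Finsupp.le_degree i m).trans (degree_of_mem_support hP hm).le
  calc |coeff m P| * |(m i : ℝ)| ≤ |coeff m P| * n :=
        mul_le_mul_of_nonneg_left h1 (abs_nonneg _)
    _ = n * |coeff m P| := mul_comm _ _

theorem abs_coord_le_norm (x : EuclideanSpace ℝ (Fin 3)) (i : Fin 3) : |x i| ≤ ‖x‖ := by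
  rw [EuclideanSpace.norm_eq]
  have h1 : |x i| = Real.sqrt ((x i) ^ 2) := by
    rw [Real.sqrt_sq_eq_abs]
  rw [h1]
  apply Real.sqrt_le_sqrt
  have := Finset.single_le_sum (f := fun j => ‖x j‖ ^ 2)
    (fun j _ => sq_nonneg _) (Finset.mem_univ i)
  simpa [Real.norm_eq_abs, sq_abs] using this

theorem abs_ev_le {P : MvPolynomial (Fin 3) ℝ} {n : ℕ} (hP : P.IsHomogeneous n)
    (x : EuclideanSpace ℝ (Fin 3)) : |ev P x| ≤ l1 P * ‖x‖ ^ n := by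
  rw [ev, MvPolynomial.eval_eq', l1, Finset.sum_mul]
  refine (Finset.abs_sum_le_sum_abs _ _).trans (Finset.sum_le_sum fun m hm => ?_)
  rw [abs_mul]
  refine mul_le_mul_of_nonneg_left ?_ (abs_nonneg _)
  have h1 : |∏ j, x j ^ m j| = ∏ j, |x j| ^ m j := by
    rw [Finset.abs_prod]
    exact Finset.prod_congr rfl fun j _ => by rw [abs_pow]
  rw [h1]
  have h2 : (∏ j, |x j| ^ m j) ≤ ∏ j, ‖x‖ ^ m j := by
    refine Finset.prod_le_prod (fun j _ => by positivity) fun j _ =>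
      pow_le_pow_left₀ (abs_nonneg _) (abs_coord_le_norm x j) _
  refine h2.trans (le_of_eq ?_)
  rw [Finset.prod_pow_eq_pow_sum]
  congr 1
  rw [← degree_of_mem_support hP hm, Finsupp.degree]
  exact (Finset.sum_subset (Finset.subset_univ _) fun j _ hj => by
    simpa using Finsupp.notMem_support_iff.mp hj).symm

noncomputable def Spoly : MvPolynomial (Fin 3) ℝ := ∑ i, X i ^ 2

theorem ev_Spoly (x : EuclideanSpace ℝ (Fin 3)) : ev Spoly x = ‖x‖ ^ 2 := by
  rw [EuclideanSpace.norm_eq, Real.sq_sqrt (Finset.sum_nonneg fun j _ => sq_nonneg _)]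
  simp [Spoly, ev, Real.norm_eq_abs, sq_abs]

theorem Spoly_isHomogeneous : Spoly.IsHomogeneous 2 :=
  MvPolynomial.IsHomogeneous.sum _ _ _ fun i _ => MvPolynomial.isHomogeneous_X_pow i 2

theorem pderiv_Spoly (i : Fin 3) : pderiv i Spoly = C (2 : ℝ) * X i := by
  rw [Spoly, map_sum, Finset.sum_eq_single i]
  · rw [show ((X i : MvPolynomial (Fin 3) ℝ) ^ 2) = X i * X i by ring, pderiv_mul,
      pderiv_X_self, mul_one, one_mul]
    rw [show (C (2:ℝ) : MvPolynomial (Fin 3) ℝ) = 2 from map_ofNat C 2]; ring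
  · intro j _ hj
    rw [show ((X j : MvPolynomial (Fin 3) ℝ) ^ 2) = X j * X j by ring, pderiv_mul,
      pderiv_X_of_ne hj, mul_zero, zero_mul, add_zero]
  · intro h; exact absurd (Finset.mem_univ i) h

theorem ev_pderiv_Spoly (i : Fin 3) (x : EuclideanSpace ℝ (Fin 3)) :
    ev (pderiv i Spoly) x = 2 * x i := by
  rw [pderiv_Spoly]
  simp [ev]

theorem l1_Spoly_mul_le (R : MvPolynomial (Fin 3) ℝ) : l1 (Spoly * R) ≤ 3 * l1 R := by
  rw [Spoly, Finset.sum_mul]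
  refine (l1_sum_le _ _).trans ?_
  have h : ∀ i : Fin 3, l1 ((X i : MvPolynomial (Fin 3) ℝ) ^ 2 * R) ≤ l1 R := by
    intro i
    rw [show ((X i : MvPolynomial (Fin 3) ℝ) ^ 2 * R) = X i * (X i * R) by ring]
    exact (l1_X_mul_le _ _).trans (l1_X_mul_le _ _)
  calc (∑ i : Fin 3, l1 ((X i : MvPolynomial (Fin 3) ℝ) ^ 2 * R))
      ≤ ∑ _i : Fin 3, l1 R := Finset.sum_le_sum fun i _ => h i
    _ = 3 * l1 R := by simp [Finset.sum_const]

theorem isHomogeneous_smul (r : ℝ) {P : MvPolynomial (Fin 3) ℝ} {k : ℕ}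
    (h : P.IsHomogeneous k) : (r • P).IsHomogeneous k := by
  rw [smul_eq_C_mul]
  simpa using (MvPolynomial.isHomogeneous_C (Fin 3) r).mul h

theorem pderiv_eq_zero_of_isHomogeneous_zero {P : MvPolynomial (Fin 3) ℝ}
    (h : P.IsHomogeneous 0) (i : Fin 3) : pderiv i P = 0 := by
  rw [pderiv_as_sum]
  refine Finset.sum_eq_zero fun m hm => ?_
  have h1 : m i = 0 := by
    have := (Finsupp.le_degree i m).trans (degree_of_mem_support h hm).le
    omega
  rw [h1]
  simp

theorem rpow_helper {c : ℝ} (hc : 0 < c) (k : ℕ) :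
    (c ^ 2) ^ (-((k : ℝ)) / 2) = (c ^ k)⁻¹ := by
  rw [show (c ^ 2) = c ^ ((2 : ℕ) : ℝ) from (Real.rpow_natCast c 2).symm,
    ← Real.rpow_mul hc.le, show (c ^ k) = c ^ ((k : ℕ) : ℝ) from (Real.rpow_natCast c k).symm,
    ← Real.rpow_neg hc.le]
  congr 1
  ring

theorem key (L : List (Fin 3)) : ∃ P : MvPolynomial (Fin 3) ℝ,
    P.IsHomogeneous L.length ∧ l1 P ≤ 6 ^ L.length * (Nat.factorial L.length) ∧
    ∀ x : EuclideanSpace ℝ (Fin 3), x ≠ 0 →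
      pderivList L (fun y => 1 / ‖y‖) x = ev P x / ‖x‖ ^ (2 * L.length + 1) := by
  induction L with
  | nil =>
      refine ⟨1, MvPolynomial.isHomogeneous_one _ _, ?_, ?_⟩
      · have h1 : (1 : MvPolynomial (Fin 3) ℝ) = monomial 0 1 := by
          rw [MvPolynomial.monomial_zero', MvPolynomial.C_1]
        calc l1 1 ≤ |(1:ℝ)| := h1 ▸ l1_monomial_le 0 1
          _ ≤ 6 ^ [].length * (Nat.factorial [].length) := by norm_num
      · intro x hx
        simp [pderivList, ev]
  | cons i L ih =>
      obtain ⟨P, hhom, hl1, hrep⟩ := ih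
      set n := L.length with hn
      set Q := Spoly * pderiv i P + (-(2 * (n : ℝ) + 1)) • (X i * P) with hQdef
      have hlen : (i :: L).length = n + 1 := by simp [hn]
      rw [hlen]
      refine ⟨Q, ?_, ?_, ?_⟩
      · apply MvPolynomial.IsHomogeneous.add
        · rcases Nat.eq_zero_or_pos n with h0 | hpos
          · rw [pderiv_eq_zero_of_isHomogeneous_zero (h0 ▸ hhom) i, mul_zero]
            exact MvPolynomial.isHomogeneous_zero _ _ _
          · have h2 := Spoly_isHomogeneous.mul (isHomogeneous_pderiv hhom i)
            have he : 2 + (n - 1) = n + 1 := by omega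
            rwa [he] at h2
        · apply isHomogeneous_smul
          have h2 := (MvPolynomial.isHomogeneous_X ℝ i).mul hhom
          rwa [Nat.add_comm 1 n] at h2
      · have h1 := l1_Spoly_mul_le (pderiv i P)
        have h2 := l1_pderiv_le i hhom
        have h3 := l1_smul_le (-(2 * (n : ℝ) + 1)) (X i * P)
        have h4 := l1_X_mul_le i P
        have h5 := l1_add_le (Spoly * pderiv i P) ((-(2 * (n : ℝ) + 1)) • (X i * P))
        have habs : |(-(2 * (n : ℝ) + 1))| = 2 * (n : ℝ) + 1 := by
          rw [abs_neg, abs_of_nonneg (by positivity)]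
        rw [habs] at h3
        have hP0 := l1_nonneg P
        have hXP0 := l1_nonneg (X i * P)
        have hd0 := l1_nonneg (pderiv i P)
        have heq : (6 : ℝ) ^ (n + 1) * (Nat.factorial (n + 1)) =
            6 * ((n : ℝ) + 1) * (6 ^ n * (Nat.factorial n)) := by
          rw [pow_succ, Nat.factorial_succ]; push_cast; ring
        have hpow0 : (0:ℝ) ≤ 6 ^ n * (Nat.factorial n) := by positivity
        rw [← hQdef] at h5
        rw [heq]
        nlinarith [mul_le_mul_of_nonneg_left hl1 (show (0:ℝ) ≤ 5 * n + 1 by positivity)]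
      · intro x hx
        have hxn : (0 : ℝ) < ‖x‖ := norm_pos_iff.mpr hx
        set r : ℝ := -(2 * (n : ℝ) + 1) / 2 with hr
        have hSx : ev Spoly x = ‖x‖ ^ 2 := ev_Spoly x
        have hSpos : 0 < ev Spoly x := by rw [hSx]; positivity
        have hqr : HasFDerivAt (fun y => (ev Spoly y) ^ r)
            ((r * (ev Spoly x) ^ (r - 1)) • evD Spoly x) x :=
          (Real.hasDerivAt_rpow_const (p := r) (Or.inl (ne_of_gt hSpos))).comp_hasFDerivAt x
            (hasFDerivAt_ev Spoly x)
        have hg : HasFDerivAt (fun y => ev P y * (ev Spoly y) ^ r)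
            (ev P x • ((r * (ev Spoly x) ^ (r - 1)) • evD Spoly x)
              + ((ev Spoly x) ^ r) • evD P x) x :=
          (hasFDerivAt_ev P x).mul hqr
        have hrval : r = -(((2 * n + 1 : ℕ)) : ℝ) / 2 := by rw [hr]; push_cast; ring
        have hev : pderivList L (fun y => 1 / ‖y‖) =ᶠ[nhds x]
            fun y => ev P y * (ev Spoly y) ^ r := by
          have hopen : {y : EuclideanSpace ℝ (Fin 3) | y ≠ 0} ∈ nhds x :=
            isOpen_compl_singleton.mem_nhds hx
          filter_upwards [hopen] with y hy
          have hyn : (0 : ℝ) < ‖y‖ := norm_pos_iff.mpr hy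
          rw [hrep y hy, ev_Spoly y, hrval, rpow_helper hyn (2 * n + 1), div_eq_mul_inv]
        show fderiv ℝ (pderivList L (fun y => 1 / ‖y‖)) x (EuclideanSpace.single i 1) = _
        rw [hev.fderiv_eq, hg.fderiv]
        rw [ContinuousLinearMap.add_apply, ContinuousLinearMap.smul_apply,
          ContinuousLinearMap.smul_apply, ContinuousLinearMap.smul_apply,
          evD_apply_single, evD_apply_single, ev_pderiv_Spoly]
        have e1 : (ev Spoly x) ^ (r - 1) = (‖x‖ ^ (2 * n + 3))⁻¹ := by
          rw [hSx, show r - 1 = -(((2 * n + 3 : ℕ)) : ℝ) / 2 by rw [hr]; push_cast; ring,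
            rpow_helper hxn]
        have e2 : (ev Spoly x) ^ r = (‖x‖ ^ (2 * n + 1))⁻¹ := by
          rw [hSx, hrval, rpow_helper hxn]
        have hevQ : ev Q x = ‖x‖ ^ 2 * ev (pderiv i P) x
            - (2 * (n : ℝ) + 1) * (x i * ev P x) := by
          rw [hQdef]
          rw [show ev (Spoly * pderiv i P + (-(2 * (n : ℝ) + 1)) • (X i * P)) x
            = ev Spoly x * ev (pderiv i P) x
              + (-(2 * (n : ℝ) + 1)) * (ev (X i) x * ev P x) by
              simp [ev, smul_eq_C_mul]]
          rw [hSx]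
          simp [ev]
          ring
        rw [e1, e2, hevQ]
        have hne1 : (‖x‖ : ℝ) ≠ 0 := ne_of_gt hxn
        rw [hr]
        have hk : ‖x‖ ^ (2 * (n + 1) + 1) = ‖x‖ ^ (2 * n + 1) * ‖x‖ ^ 2 := by ring
        have hk2 : ‖x‖ ^ (2 * n + 3) = ‖x‖ ^ (2 * n + 1) * ‖x‖ ^ 2 := by ring
        simp only [hk, hk2, smul_eq_mul]
        field_simp
        ring

/-- There exists `K > 0` such that for every multi-index `α ∈ ℕ³` and every `x ≠ 0`,
`|∂^α (1/|x|)| ≤ K^{|α|} |α|! / |x|^{1+|α|}`. -/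
theorem deriv_inv_norm_bound :
    ∃ K : ℝ, 0 < K ∧ ∀ (α : Fin 3 → ℕ) (x : EuclideanSpace ℝ (Fin 3)), x ≠ 0 →
      |multiDeriv α (fun y => 1 / ‖y‖) x| ≤
        K ^ (∑ i, α i) * Nat.factorial (∑ i, α i) / ‖x‖ ^ (1 + ∑ i, α i) := by
  refine ⟨6, by norm_num, ?_⟩
  intro α x hx
  set L : List (Fin 3) := (List.finRange 3).flatMap fun i => List.replicate (α i) i with hL
  have hlen : L.length = ∑ i, α i := by
    rw [hL, List.length_flatMap]
    simp [Fin.sum_univ_def, Function.comp_def]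
  obtain ⟨P, hhom, hl1, hrep⟩ := key L
  rw [hlen] at hhom hl1 hrep
  have hrw : multiDeriv α (fun y => 1 / ‖y‖) x = ev P x / ‖x‖ ^ (2 * (∑ i, α i) + 1) := by
    rw [multiDeriv, ← hL, hrep x hx]
  rw [hrw]
  set n := ∑ i, α i
  have hxn : (0 : ℝ) < ‖x‖ := norm_pos_iff.mpr hx
  have hb : |ev P x| ≤ (6 ^ n * (Nat.factorial n : ℝ)) * ‖x‖ ^ n :=
    (abs_ev_le hhom x).trans
      (mul_le_mul_of_nonneg_right hl1 (pow_nonneg (norm_nonneg x) n))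
  rw [abs_div, abs_of_nonneg (pow_nonneg (norm_nonneg x) _)]
  rw [div_le_div_iff₀ (by positivity) (by positivity)]
  calc |ev P x| * ‖x‖ ^ (1 + n)
      ≤ ((6 ^ n * (Nat.factorial n : ℝ)) * ‖x‖ ^ n) * ‖x‖ ^ (1 + n) :=
        mul_le_mul_of_nonneg_right hb (by positivity)
    _ = (6 ^ n * (Nat.factorial n : ℝ)) * ‖x‖ ^ (2 * n + 1) := by
        rw [mul_assoc, ← pow_add]
        congr 2
        omega
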